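/- Let λ₀, s₀ : ℤ → ℝ, fix n ≥ 1 and an integer x₀. Assume λ_{n−1}(x) ≠ 0 and λ_n(x) ≠ 0 for all x ∈ ℤ, and assume the terminating condition s_n(x)λ_{n−1}(x) = s_{n−1}(x)λ_n(x) holds for all x ∈ ℤ. Then the function y defined on integers x ≥ x₀ by y(x) = ∏_{i=x₀}^{x−1} (1 − s_{n−1}(i)/λ_{n−1}(i)) satisfies (Δ²y)(x) = λ₀(x)(Δy)(x) + s₀(x)y(x) for every integer x ≥ x₀. -/

import Mathlib

/-- Forward difference operator on functions `ℤ → ℝ`: `(Δ f)(x) = f(x+1) - f(x)`. -/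
noncomputable def fd (f : ℤ → ℝ) : ℤ → ℝ := fun x => f (x + 1) - f x

/-- The DAIM sequences `(λ_n, s_n)` built from `(λ₀, s₀)`. -/
noncomputable def daim (l0 s0 : ℤ → ℝ) : ℕ → (ℤ → ℝ) × (ℤ → ℝ)
  | 0 => (l0, s0)
  | n + 1 =>
      (fun x => fd (daim l0 s0 n).1 x + (daim l0 s0 n).1 (x + 1) * l0 x
          + (daim l0 s0 n).2 (x + 1),
       fun x => fd (daim l0 s0 n).2 x + (daim l0 s0 n).1 (x + 1) * s0 x)

theorem stmt_2 (l0 s0 : ℤ → ℝ) (n : ℕ) (hn : 1 ≤ n) (x0 : ℤ)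
    (hl1 : ∀ x : ℤ, (daim l0 s0 (n - 1)).1 x ≠ 0)
    (hl2 : ∀ x : ℤ, (daim l0 s0 n).1 x ≠ 0)
    (hterm : ∀ x : ℤ,
      (daim l0 s0 n).2 x * (daim l0 s0 (n - 1)).1 x
        = (daim l0 s0 (n - 1)).2 x * (daim l0 s0 n).1 x)
    (y : ℤ → ℝ)
    (hy : ∀ x : ℤ, x0 ≤ x →
      y x = ∏ i ∈ Finset.Ico x0 x,
        (1 - (daim l0 s0 (n - 1)).2 i / (daim l0 s0 (n - 1)).1 i)) :
    ∀ x : ℤ, x0 ≤ x → fd (fd y) x = l0 x * fd y x + s0 x * y x := by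
  obtain ⟨m, rfl⟩ : ∃ m, n = m + 1 := ⟨n - 1, (Nat.succ_pred_eq_of_pos hn).symm⟩
  simp only [Nat.add_sub_cancel] at hl1 hterm hy
  set lam := (daim l0 s0 m).1 with hlam
  set s := (daim l0 s0 m).2 with hs
  have hstep : ∀ x : ℤ, x0 ≤ x → y (x + 1) = y x * (1 - s x / lam x) := by
    intro x hx
    have hins : Finset.Ico x0 (x + 1) = insert x (Finset.Ico x0 x) := by
      ext i; simp only [Finset.mem_Ico, Finset.mem_insert]; omega
    rw [hy x hx, hy (x + 1) (by omega), hins,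
      Finset.prod_insert Finset.right_notMem_Ico, mul_comm]
  intro x hx
  have h1 := hstep x hx
  have h2 := hstep (x + 1) (by omega)
  rw [h1] at h2
  have ht := hterm x
  simp only [daim, fd] at ht
  rw [← hlam, ← hs] at ht
  simp only [fd, h1, h2]
  have ha := hl1 x
  have hb := hl1 (x + 1)
  field_simp
  ring_nf
  ring_nf at ht
  linear_combination (-(y x)) * ht
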